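/- Let n ≥ 1 and let s = (s_1, ..., s_n) be a sequence of positive integers with s_i ≥ s_{i+1} for i = 1, ..., n-1. Then s is connected (i.e., realisable as a connected loopless multigraph) if and only if s is realisable and s_1 + s_2 + ... + s_n ≥ 2(n-1). -/

import Mathlib

/-- A sequence `s` of length `n` is realisable as a loopless multigraph if there is a
symmetric matrix of edge multiplicities with zero diagonal whose row sums are `s`. -/
def Realisable (n : ℕ) (s : Fin n → ℕ) : Prop :=
  ∃ A : Fin n → Fin n → ℕ,
    (∀ i, A i i = 0) ∧ (∀ i j, A i j = A j i) ∧ (∀ i, ∑ j, A i j = s i)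

/-- A sequence `s` is connected if it admits a realisation as a loopless multigraph
whose underlying simple graph (adjacency: `i ≠ j` and at least one edge) is connected. -/
def ConnectedRealisable (n : ℕ) (s : Fin n → ℕ) : Prop :=
  ∃ A : Fin n → Fin n → ℕ,
    (∀ i, A i i = 0) ∧ (∀ i j, A i j = A j i) ∧ (∀ i, ∑ j, A i j = s i) ∧
      (SimpleGraph.fromRel fun i j => A i j ≠ 0).Connected


lemma even_total {n : ℕ} (A : Fin n → Fin n → ℕ) (hd : ∀ i, A i i = 0)
    (hs : ∀ i j, A i j = A j i) : Even (∑ i, ∑ j, A i j) := by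
  classical
  set P := (Finset.univ ×ˢ Finset.univ).filter (fun p : Fin n × Fin n => p.1 < p.2) with hP
  set Q := (Finset.univ ×ˢ Finset.univ).filter (fun p : Fin n × Fin n => p.2 < p.1) with hQ
  have h1 : ∑ i, ∑ j, A i j = ∑ p ∈ Finset.univ ×ˢ Finset.univ, A (p : Fin n × Fin n).1 p.2 :=
    (Finset.sum_product' _ _ _).symm
  have h2 : ∑ p ∈ Finset.univ ×ˢ Finset.univ, A (p : Fin n × Fin n).1 p.2
      = ∑ p ∈ P, A p.1 p.2 + ∑ p ∈ (Finset.univ ×ˢ Finset.univ).filter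
        (fun p : Fin n × Fin n => ¬ p.1 < p.2), A p.1 p.2 :=
    (Finset.sum_filter_add_sum_filter_not _ _ _).symm
  have h3 : ∑ p ∈ (Finset.univ ×ˢ Finset.univ).filter
      (fun p : Fin n × Fin n => ¬ p.1 < p.2), A p.1 p.2 = ∑ p ∈ Q, A p.1 p.2 := by
    refine (Finset.sum_subset ?_ ?_).symm
    · intro p hp
      simp only [hQ, hP, Finset.mem_filter] at *
      exact ⟨hp.1, not_lt.2 hp.2.le⟩
    · intro p hp hnp
      simp only [hQ, hP, Finset.mem_filter] at *
      have : p.1 = p.2 := le_antisymm (not_lt.1 (fun h => hnp ⟨hp.1, h⟩)) (not_lt.1 hp.2)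
      rw [this, hd]
  have h4 : ∑ p ∈ Q, A p.1 p.2 = ∑ p ∈ P, A p.1 p.2 := by
    refine Finset.sum_equiv (Equiv.prodComm (Fin n) (Fin n)) ?_ ?_
    · intro p
      simp [hP, hQ]
    · intro p hp
      exact hs _ _
  exact ⟨∑ p ∈ P, A p.1 p.2, by omega⟩


open SimpleGraph in
lemma card_le_edges {V : Type} [Fintype V] [DecidableEq V] (G : SimpleGraph V)
    [DecidableRel G.Adj] (hG : G.Connected) :
    Fintype.card V - 1 ≤ G.edgeFinset.card := by
  classical
  obtain ⟨v0⟩ := hG.nonempty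
  have hpar : ∀ u : V, u ≠ v0 → ∃ w, G.Adj u w ∧ G.dist w v0 < G.dist u v0 := by
    intro u hu
    have hd : G.dist u v0 ≠ 0 :=
      (SimpleGraph.dist_ne_zero_iff_ne_and_reachable).2 ⟨hu, hG.preconnected u v0⟩
    obtain ⟨p, hp⟩ := SimpleGraph.exists_walk_of_dist_ne_zero hd
    cases p with
    | nil => exact absurd rfl hu
    | cons h q =>
      refine ⟨_, h, ?_⟩
      have := SimpleGraph.dist_le q
      simp [SimpleGraph.Walk.length_cons] at hp
      omega
  set f : V → Sym2 V := fun u =>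
    if h : u ≠ v0 then s(u, Classical.choose (hpar u h)) else s(v0, v0) with hf
  have hcard : (Finset.univ.erase v0).card = Fintype.card V - 1 := by
    simp [Finset.card_erase_of_mem]
  rw [← hcard]
  apply Finset.card_le_card_of_injOn f
  · intro u hu
    have h : u ≠ v0 := Finset.ne_of_mem_erase hu
    have := (Classical.choose_spec (hpar u h)).1
    simp only [hf, dif_pos h]
    rw [Finset.mem_coe, SimpleGraph.mem_edgeFinset, SimpleGraph.mem_edgeSet]
    exact this
  · intro u₁ h₁ u₂ h₂ heq
    have hu₁ : u₁ ≠ v0 := Finset.ne_of_mem_erase h₁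
    have hu₂ : u₂ ≠ v0 := Finset.ne_of_mem_erase h₂
    simp only [hf, dif_pos hu₁, dif_pos hu₂, Sym2.eq, Sym2.rel_iff', Prod.mk.injEq,
      Prod.swap_prod_mk] at heq
    rcases heq with ⟨h, -⟩ | ⟨ha, hb⟩
    · exact h
    · exfalso
      have d₁ := (Classical.choose_spec (hpar u₁ hu₁)).2
      have d₂ := (Classical.choose_spec (hpar u₂ hu₂)).2
      rw [← ha] at d₂
      rw [hb] at d₁
      omega


lemma three_le {V : Type} [Fintype V] [DecidableEq V] (s : V → ℕ) (hpos : ∀ v, 0 < s v)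
    (a b c : V) (hab : a ≠ b) (hac : a ≠ c) (hbc : b ≠ c) :
    s a + s b + s c + (Fintype.card V - 3) ≤ ∑ v, s v := by
  classical
  have hsub : ({a, b, c} : Finset V) ⊆ Finset.univ := Finset.subset_univ _
  have hsplit := Finset.sum_sdiff (f := s) hsub
  have hcard3 : ({a, b, c} : Finset V).card = 3 := by
    rw [Finset.card_insert_of_notMem (by simp [hab, hac]),
      Finset.card_insert_of_notMem (by simp [hbc]), Finset.card_singleton]
  have h3 : ∑ v ∈ ({a, b, c} : Finset V), s v = s a + s b + s c := by
    rw [Finset.sum_insert (by simp [hab, hac]), Finset.sum_insert (by simp [hbc]),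
      Finset.sum_singleton]
    ring
  have hrest : (Finset.univ \ ({a, b, c} : Finset V)).card ≤
      ∑ v ∈ Finset.univ \ ({a, b, c} : Finset V), s v := by
    have := Finset.card_nsmul_le_sum (Finset.univ \ ({a, b, c} : Finset V)) s 1
      (fun x _ => hpos x)
    simpa using this
  have hcards : (Finset.univ \ ({a, b, c} : Finset V)).card = Fintype.card V - 3 := by
    rw [Finset.card_sdiff_of_subset hsub, hcard3, Finset.card_univ]
  omega

lemma key : ∀ (m : ℕ) (V : Type) [Fintype V] [DecidableEq V] (s : V → ℕ),
    Nonempty V → ∑ v, s v = m → (∀ v, 0 < s v) → Even m → (∀ v, 2 * s v ≤ m) →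
    2 * (Fintype.card V - 1) ≤ m →
    ∃ A : V → V → ℕ, (∀ i, A i i = 0) ∧ (∀ i j, A i j = A j i) ∧ (∀ i, ∑ j, A i j = s i) ∧
      (SimpleGraph.fromRel fun i j => A i j ≠ 0).Connected := by
  intro m
  induction m using Nat.strong_induction_on with
  | _ m IH =>
  intro V _ _ s hV hsum hpos heven hmax hcard
  classical
  haveI := hV
  obtain ⟨k, hk⟩ := heven
  have v1 : V := Classical.arbitrary V
  have hn1 : 1 ≤ Fintype.card V := Fintype.card_pos
  -- n = 1 is impossible
  rcases Nat.lt_or_ge (Fintype.card V) 2 with hn2 | hn2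
  · exfalso
    have hone : Fintype.card V = 1 := by omega
    obtain ⟨v0, hv0⟩ := Fintype.card_eq_one_iff.1 hone
    have : ∑ v, s v = s v0 := by
      rw [show (Finset.univ : Finset V) = {v0} from
        Finset.eq_singleton_iff_unique_mem.2 ⟨Finset.mem_univ _, fun x _ => hv0 x⟩]
      simp
    have h1 := hmax v0
    have h2 := hpos v0
    omega
  -- pick the two largest values
  obtain ⟨i, -, hi⟩ := Finset.exists_max_image Finset.univ s ⟨v1, Finset.mem_univ v1⟩
  have herne : (Finset.univ.erase i).Nonempty := by
    rw [← Finset.card_pos, Finset.card_erase_of_mem (Finset.mem_univ i), Finset.card_univ]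
    omega
  obtain ⟨j, hjmem, hj⟩ := Finset.exists_max_image (Finset.univ.erase i) s herne
  have hji : j ≠ i := Finset.ne_of_mem_erase hjmem
  have he1 : s j + ∑ v ∈ (Finset.univ.erase i).erase j, s v = ∑ v ∈ Finset.univ.erase i, s v :=
    Finset.add_sum_erase _ s hjmem
  have he2 : s i + ∑ v ∈ Finset.univ.erase i, s v = m := by
    rw [← hsum]; exact Finset.add_sum_erase _ s (Finset.mem_univ i)
  rcases Nat.lt_or_ge (2 * (Fintype.card V - 1)) m with hbig | hsmall
  · -- CASE A : m > 2(n-1), add an extra edge between i and j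
    have hm2n : 2 * Fintype.card V ≤ m := by omega
    have hsj2 : 2 ≤ s j := by
      by_contra hlt
      have hall : ∀ v ∈ Finset.univ.erase i, s v ≤ 1 := fun v hv => by
        have := hj v hv; omega
      have hle : ∑ v ∈ Finset.univ.erase i, s v ≤ (Finset.univ.erase i).card * 1 :=
        Finset.sum_le_card_nsmul _ _ _ hall
      rw [Finset.card_erase_of_mem (Finset.mem_univ i), Finset.card_univ] at hle
      have hmi := hmax i
      omega
    have hsi2 : 2 ≤ s i := le_trans hsj2 (hi j (Finset.mem_univ j))
    set s' : V → ℕ := fun v => if v = i ∨ v = j then s v - 1 else s v with hs'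
    have hs'i : s' i = s i - 1 := by simp [hs']
    have hs'j : s' j = s j - 1 := by simp [hs']
    have hs'other : ∀ v, v ≠ i → v ≠ j → s' v = s v := fun v h1 h2 => by simp [hs', h1, h2]
    have hsum' : ∑ v, s' v = m - 2 := by
      have g1 : s' j + ∑ v ∈ (Finset.univ.erase i).erase j, s' v
          = ∑ v ∈ Finset.univ.erase i, s' v := Finset.add_sum_erase _ s' hjmem
      have g2 : s' i + ∑ v ∈ Finset.univ.erase i, s' v = ∑ v, s' v :=
        Finset.add_sum_erase _ s' (Finset.mem_univ i)
      have g3 : ∑ v ∈ (Finset.univ.erase i).erase j, s' v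
          = ∑ v ∈ (Finset.univ.erase i).erase j, s v := by
        apply Finset.sum_congr rfl
        intro v hv
        exact hs'other v (Finset.ne_of_mem_erase (Finset.mem_of_mem_erase hv))
          (Finset.ne_of_mem_erase hv)
      rw [← g2, ← g1, g3, hs'i, hs'j]
      omega
    have hpos' : ∀ v, 0 < s' v := by
      intro v
      by_cases h1 : v = i
      · rw [h1, hs'i]; omega
      by_cases h2 : v = j
      · rw [h2, hs'j]; omega
      · rw [hs'other v h1 h2]; exact hpos v
    have hmax' : ∀ v, 2 * s' v ≤ m - 2 := by
      intro v
      by_cases h1 : v = i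
      · rw [h1, hs'i]; have := hmax i; omega
      by_cases h2 : v = j
      · rw [h2, hs'j]; have := hmax j; omega
      · rw [hs'other v h1 h2]
        have h3 := three_le s hpos i j v (Ne.symm hji) (fun h => h1 h.symm) (fun h => h2 h.symm)
        have h4 := hi v (Finset.mem_univ v)
        have h5 := hj v (Finset.mem_erase.2 ⟨h1, Finset.mem_univ v⟩)
        rw [hsum] at h3
        omega
    obtain ⟨A', hd', hsym', hrow', hconn'⟩ :=
      IH (m - 2) (by omega) V s' hV hsum' hpos' ⟨k - 1, by omega⟩ hmax' (by omega)
    refine ⟨fun u v => A' u v + (if (u = i ∧ v = j) ∨ (u = j ∧ v = i) then 1 else 0),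
      ?_, ?_, ?_, ?_⟩
    · intro u
      show A' u u + (if (u = i ∧ u = j) ∨ (u = j ∧ u = i) then 1 else 0) = 0
      rw [hd']
      have : ¬ ((u = i ∧ u = j) ∨ (u = j ∧ u = i)) := by
        rintro (⟨rfl, rfl⟩ | ⟨rfl, rfl⟩) <;> exact hji rfl
      simp [this]
    · intro u v
      show A' u v + _ = A' v u + _
      rw [hsym']
      congr 1
      by_cases h : (u = i ∧ v = j) ∨ (u = j ∧ v = i)
      · rw [if_pos h, if_pos (by tauto)]
      · rw [if_neg h, if_neg (by tauto)]
    · intro u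
      show ∑ v, (A' u v + (if (u = i ∧ v = j) ∨ (u = j ∧ v = i) then 1 else 0)) = s u
      rw [Finset.sum_add_distrib, hrow']
      have hind : ∑ v, (if (u = i ∧ v = j) ∨ (u = j ∧ v = i) then (1:ℕ) else 0)
          = if u = i ∨ u = j then 1 else 0 := by
        by_cases hu1 : u = i
        · simp [hu1, Ne.symm hji, Finset.sum_ite_eq']
        by_cases hu2 : u = j
        · simp [hu1, hu2, hji, Finset.sum_ite_eq']
        · simp [hu1, hu2]
      rw [hind]
      by_cases h1 : u = i
      · rw [h1, hs'i, if_pos (Or.inl rfl)]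
        have := hpos i; omega
      by_cases h2 : u = j
      · rw [h2, hs'j, if_pos (Or.inr rfl)]
        have := hpos j; omega
      · rw [hs'other u h1 h2, if_neg (by tauto)]
        omega
    · refine SimpleGraph.Connected.mono ?_ hconn'
      intro a b hab
      rw [SimpleGraph.fromRel_adj] at hab ⊢
      obtain ⟨hne, h⟩ := hab
      refine ⟨hne, Or.inl ?_⟩
      have : A' a b ≠ 0 := by
        rcases h with h | h
        · exact h
        · rw [hsym']; exact h
      intro hcontra
      have h9 : A' a b + (if (a = i ∧ b = j) ∨ (a = j ∧ b = i) then 1 else 0) = 0 := hcontra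
      omega
  · -- CASE B : m = 2(n-1), tree construction
    have hmeq : m = 2 * (Fintype.card V - 1) := le_antisymm hsmall hcard
    rcases Nat.lt_or_ge (Fintype.card V) 3 with hn3 | hn3
    · -- n = 2 : a single edge
      have hn2' : Fintype.card V = 2 := by omega
      have hm2 : m = 2 := by omega
      have hs1 : ∀ v, s v = 1 := by
        intro v
        have h1 := hmax v
        have h2 := hpos v
        omega
      refine ⟨fun u v => if u = v then 0 else 1, fun u => by simp, fun u v => ?_, fun u => ?_, ?_⟩
      · by_cases h : u = v
        · simp [h]
        · simp [h, Ne.symm h]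
      · rw [hs1 u]
        have e1 : ∑ v, (if u = v then (0:ℕ) else 1)
            = ∑ v ∈ Finset.univ.erase u, (if u = v then (0:ℕ) else 1) :=
          (Finset.sum_erase _ (by simp)).symm
        rw [e1, Finset.sum_congr rfl
          (fun v hv => if_neg (Ne.symm (Finset.ne_of_mem_erase hv)))]
        simp [Finset.card_erase_of_mem, hn2']
      · rw [SimpleGraph.connected_iff]
        refine ⟨fun u v => ?_, hV⟩
        by_cases h : u = v
        · rw [h]
        · refine SimpleGraph.Adj.reachable ?_
          rw [SimpleGraph.fromRel_adj]
          exact ⟨h, Or.inl (by simp [h])⟩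
    · -- n ≥ 3 : peel off a leaf
      have hex1 : ∃ c, s c = 1 := by
        by_contra hno
        push_neg at hno
        have h2 : ∀ v, 2 ≤ s v := fun v => by have := hpos v; have := hno v; omega
        have hge : 2 * Fintype.card V ≤ ∑ v, s v := by
          calc 2 * Fintype.card V = ∑ _v : V, 2 := by simp [Finset.card_univ, mul_comm]
          _ ≤ ∑ v, s v := Finset.sum_le_sum (fun v _ => h2 v)
        omega
      obtain ⟨a, ha⟩ := hex1
      have hex2 : ∃ b, b ≠ a ∧ 2 ≤ s b := by
        by_contra hno
        push_neg at hno
        have hall : ∀ v ∈ Finset.univ.erase a, s v ≤ 1 := fun v hv => by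
          have := hno v (Finset.ne_of_mem_erase hv); omega
        have hle : ∑ v ∈ Finset.univ.erase a, s v ≤ (Finset.univ.erase a).card * 1 :=
          Finset.sum_le_card_nsmul _ _ _ hall
        rw [Finset.card_erase_of_mem (Finset.mem_univ a), Finset.card_univ] at hle
        have hea : s a + ∑ v ∈ Finset.univ.erase a, s v = m := by
          rw [← hsum]; exact Finset.add_sum_erase _ s (Finset.mem_univ a)
        omega
      obtain ⟨b, hba, hb2⟩ := hex2
      have hab : ¬ a = b := fun h => hba h.symm
      haveI hWne : Nonempty {v : V // v ≠ a} := ⟨⟨b, hba⟩⟩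
      have hcardW : Fintype.card {v : V // v ≠ a} = Fintype.card V - 1 := by
        rw [Fintype.card_subtype_compl, Fintype.card_subtype_eq]
      have hWsum : ∀ (f : V → ℕ), ∑ v : {v : V // v ≠ a}, f (v : V)
          = ∑ x ∈ Finset.univ.erase a, f x := by
        intro f
        exact (Finset.sum_subtype _ (by simp) f).symm
      set s' : {v : V // v ≠ a} → ℕ :=
        fun v => if (v : V) = b then s b - 1 else s (v : V) with hs'
      have hbmem : b ∈ Finset.univ.erase a := Finset.mem_erase.2 ⟨hba, Finset.mem_univ b⟩
      have heb1 : s b + ∑ v ∈ (Finset.univ.erase a).erase b, s v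
          = ∑ v ∈ Finset.univ.erase a, s v := Finset.add_sum_erase _ s hbmem
      have hea2 : s a + ∑ v ∈ Finset.univ.erase a, s v = m := by
        rw [← hsum]; exact Finset.add_sum_erase _ s (Finset.mem_univ a)
      have hsum' : ∑ v : {v : V // v ≠ a}, s' v = m - 2 := by
        have g0 : ∑ v : {v : V // v ≠ a}, s' v
            = ∑ x ∈ Finset.univ.erase a, (if x = b then s b - 1 else s x) :=
          hWsum (fun x => if x = b then s b - 1 else s x)
        have g1 : (if b = b then s b - 1 else s b)
            + ∑ x ∈ (Finset.univ.erase a).erase b, (if x = b then s b - 1 else s x)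
            = ∑ x ∈ Finset.univ.erase a, (if x = b then s b - 1 else s x) :=
          Finset.add_sum_erase _ (fun x => if x = b then s b - 1 else s x) hbmem
        have g2 : ∑ x ∈ (Finset.univ.erase a).erase b, (if x = b then s b - 1 else s x)
            = ∑ x ∈ (Finset.univ.erase a).erase b, s x :=
          Finset.sum_congr rfl (fun x hx => if_neg (Finset.ne_of_mem_erase hx))
        rw [g0, ← g1, g2, if_pos rfl]
        omega
      have hpos' : ∀ v : {v : V // v ≠ a}, 0 < s' v := by
        intro v
        by_cases h : (v : V) = b
        · have hv : s' v = s b - 1 := by simp [hs', h]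
          rw [hv]; omega
        · have hv : s' v = s (v : V) := by simp [hs', h]
          rw [hv]; exact hpos _
      have hmax' : ∀ v : {v : V // v ≠ a}, 2 * s' v ≤ m - 2 := by
        intro v
        by_cases h : (v : V) = b
        · have := hmax b
          have hv : s' v = s b - 1 := by simp [hs', h]
          rw [hv]; omega
        · have hv : s' v = s (v : V) := by simp [hs', h]
          rw [hv]
          have h3 := three_le s hpos a b (v : V) (fun hh => hab hh)
            (fun hh => v.2 hh.symm) (fun hh => h hh.symm)
          rw [hsum] at h3
          omega
      obtain ⟨A', hd', hsym', hrow', hconn'⟩ :=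
        IH (m - 2) (by omega) {v : V // v ≠ a} s' hWne hsum' hpos'
          ⟨k - 1, by omega⟩ hmax' (by rw [hcardW]; omega)
      set A : V → V → ℕ := fun u v =>
        if hu : u = a then (if v = b then 1 else 0)
        else if hv : v = a then (if u = b then 1 else 0)
        else A' ⟨u, hu⟩ ⟨v, hv⟩ with hA
      have hAval : ∀ (x y : {v : V // v ≠ a}), A (x : V) (y : V) = A' x y := by
        intro x y
        simp only [hA, dif_neg x.2, dif_neg y.2, Subtype.coe_eta]
      have hAab : A a b = 1 := by simp [hA]
      refine ⟨A, ?_, ?_, ?_, ?_⟩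
      · intro u
        by_cases hu : u = a
        · simp [hA, hu, hab]
        · simp [hA, hu, hd']
      · intro u v
        by_cases hu : u = a <;> by_cases hv : v = a
        · simp [hA, hu, hv]
        · simp [hA, hu, hv]
        · simp [hA, hu, hv]
        · simp only [hA, dif_neg hu, dif_neg hv]
          exact hsym' _ _
      · intro u
        by_cases hu : u = a
        · rw [hu]
          have : ∀ v : V, A a v = if v = b then 1 else 0 := by
            intro v; simp [hA]
          rw [Finset.sum_congr rfl (fun v _ => this v),
            Finset.sum_ite_eq' Finset.univ b (fun _ => 1), if_pos (Finset.mem_univ b), ha]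
        · have hdec : A u a + ∑ v ∈ Finset.univ.erase a, A u v = ∑ v, A u v :=
            Finset.add_sum_erase _ _ (Finset.mem_univ a)
          have hsub : ∑ v ∈ Finset.univ.erase a, A u v
              = ∑ v : {v : V // v ≠ a}, A u (v : V) := (hWsum (fun x => A u x)).symm
          have hval : ∑ v : {v : V // v ≠ a}, A u (v : V) = s' ⟨u, hu⟩ := by
            rw [Finset.sum_congr rfl (fun v _ => hAval ⟨u, hu⟩ v), hrow']
          have hua : A u a = if u = b then 1 else 0 := by simp [hA, hu]
          have hs'u : s' ⟨u, hu⟩ = if u = b then s b - 1 else s u := rfl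
          rw [← hdec, hsub, hval, hua, hs'u]
          by_cases hub : u = b
          · rw [if_pos hub, if_pos hub, hub]; omega
          · rw [if_neg hub, if_neg hub]
            omega
      · rw [SimpleGraph.connected_iff]
        refine ⟨?_, hV⟩
        let emb : (SimpleGraph.fromRel fun x y : {v : V // v ≠ a} => A' x y ≠ 0) →g
            (SimpleGraph.fromRel fun u v : V => A u v ≠ 0) :=
          ⟨Subtype.val, by
            intro x y hxy
            rw [SimpleGraph.fromRel_adj] at hxy ⊢
            refine ⟨Subtype.coe_injective.ne hxy.1, ?_⟩
            rcases hxy.2 with h | h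
            · exact Or.inl (by rw [hAval]; exact h)
            · exact Or.inr (by rw [hAval]; exact h)⟩
        have reach : ∀ u : V, (SimpleGraph.fromRel fun u v : V => A u v ≠ 0).Reachable u b := by
          intro u
          by_cases hu : u = a
          · rw [hu]
            refine SimpleGraph.Adj.reachable ?_
            rw [SimpleGraph.fromRel_adj]
            exact ⟨hab, Or.inl (by rw [hAab]; omega)⟩
          · exact (hconn'.preconnected ⟨u, hu⟩ ⟨b, hba⟩).map emb
        intro u v
        exact (reach u).trans (reach v).symm

theorem connected_realisable_iff (n : ℕ) (hn : 1 ≤ n) (s : Fin n → ℕ)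
    (hpos : ∀ i, 0 < s i) (hmono : Antitone s) :
    ConnectedRealisable n s ↔ Realisable n s ∧ 2 * (n - 1) ≤ ∑ i, s i := by
  classical
  constructor
  · rintro ⟨A, hd, hsym, hrow, hconn⟩
    refine ⟨⟨A, hd, hsym, hrow⟩, ?_⟩
    set G := SimpleGraph.fromRel fun i j => A i j ≠ 0 with hG
    have hedges : n - 1 ≤ G.edgeFinset.card := by
      have := card_le_edges G hconn
      simpa using this
    have hfilt : (Finset.univ.filter fun (x, y) => G.Adj x y)
        = (Finset.univ.filter fun p : Fin n × Fin n => G.Adj p.1 p.2) := by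
      apply Finset.filter_congr
      rintro ⟨x, y⟩ _
      rfl
    have hstep : ∀ p : Fin n × Fin n,
        p ∈ (Finset.univ.filter fun p : Fin n × Fin n => G.Adj p.1 p.2) → 1 ≤ A p.1 p.2 := by
      intro p hp
      have hadj : G.Adj p.1 p.2 := (Finset.mem_filter.1 hp).2
      rw [hG, SimpleGraph.fromRel_adj] at hadj
      rcases hadj.2 with h | h
      · omega
      · rw [hsym p.1 p.2]; omega
    have h2 : 2 * G.edgeFinset.card ≤ ∑ i, s i := by
      rw [SimpleGraph.two_mul_card_edgeFinset, hfilt]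
      have hcard1 : (Finset.univ.filter fun p : Fin n × Fin n => G.Adj p.1 p.2).card
          ≤ ∑ p ∈ Finset.univ.filter (fun p : Fin n × Fin n => G.Adj p.1 p.2), A p.1 p.2 := by
        have := Finset.card_nsmul_le_sum
          (Finset.univ.filter fun p : Fin n × Fin n => G.Adj p.1 p.2)
          (fun p => A p.1 p.2) 1 hstep
        simpa using this
      have hcard2 : ∑ p ∈ Finset.univ.filter (fun p : Fin n × Fin n => G.Adj p.1 p.2), A p.1 p.2
          ≤ ∑ p ∈ Finset.univ ×ˢ Finset.univ, A p.1 p.2 :=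
        Finset.sum_le_sum_of_subset
          (fun p _ => Finset.mem_product.2 ⟨Finset.mem_univ _, Finset.mem_univ _⟩)
      have hcard3 : ∑ p ∈ Finset.univ ×ˢ Finset.univ, A (p : Fin n × Fin n).1 p.2
          = ∑ i, s i := by
        rw [Finset.sum_product]
        exact Finset.sum_congr rfl fun i _ => hrow i
      omega
    omega
  · rintro ⟨⟨A, hd, hsym, hrow⟩, hge⟩
    have heven : Even (∑ i, s i) := by
      have h := even_total A hd hsym
      have eq : ∑ i, ∑ j, A i j = ∑ i, s i := Finset.sum_congr rfl fun i _ => hrow i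
      rwa [eq] at h
    have hmax : ∀ i, 2 * s i ≤ ∑ v, s v := by
      intro i
      have h1 : ∀ j, A i j ≤ s j := by
        intro j
        rw [← hrow j, hsym i j]
        exact Finset.single_le_sum (fun k _ => Nat.zero_le _) (Finset.mem_univ i)
      have h2 : s i = ∑ j ∈ Finset.univ.erase i, A i j := by
        rw [← hrow i]
        exact (Finset.sum_erase _ (hd i)).symm
      have h3 : ∑ j ∈ Finset.univ.erase i, A i j ≤ ∑ j ∈ Finset.univ.erase i, s j :=
        Finset.sum_le_sum fun j _ => h1 j
      have h4 : s i + ∑ j ∈ Finset.univ.erase i, s j = ∑ v, s v :=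
        Finset.add_sum_erase _ s (Finset.mem_univ i)
      omega
    exact key (∑ i, s i) (Fin n) s ⟨⟨0, hn⟩⟩ rfl hpos heven hmax (by simpa using hge)
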